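/- arXiv:2309.11174 — 5 statements merged into one kernel-verified Lean document; each statement's English description precedes it below -/
import Mathlib

section
/- If a two-user multiple access channel W : X × Y → Z (a conditional probability kernel W(z|x,y) on finite alphabets) is 2-overwritable, i.e., there exists a conditional distribution P(x'|x,y) such that for all x ∈ X, y, y' ∈ Y, z ∈ Z, ∑_{x'} P(x'|x,y) W(z|x',y') = W(z|x,y), then W is 2-spoofable: there exist conditional distributions Q₁(x | x̃, ỹ) and Q₂(y | ỹ, y') such that for all x̃ ∈ X, ỹ, y' ∈ Y, z ∈ Z, ∑_x Q₁(x|x̃,ỹ) W(z|x,y') = ∑_x Q₁(x|x̃,y') W(z|x,ỹ) = ∑_y Q₂(y|ỹ,y') W(z|x̃,y). -/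
open Finset

/-- every 2-overwritable MAC is 2-spoofable. -/
theorem overwritable_implies_spoofable
    {X Y Z : Type} [Fintype X] [Fintype Y] [Fintype Z]
    [Nonempty X] [Nonempty Y] [Nonempty Z]
    (W : X → Y → Z → ℝ)
    (hWnn : ∀ x y z, 0 ≤ W x y z)
    (hWsum : ∀ x y, ∑ z, W x y z = 1)
    (hover : ∃ P : X → Y → X → ℝ,
      (∀ x y x', 0 ≤ P x y x') ∧ (∀ x y, ∑ x', P x y x' = 1) ∧
      (∀ x y y' z, ∑ x', P x y x' * W x' y' z = W x y z)) :
    ∃ (Q₁ : X → Y → X → ℝ) (Q₂ : Y → Y → Y → ℝ),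
      (∀ xt yt x, 0 ≤ Q₁ xt yt x) ∧ (∀ xt yt, ∑ x, Q₁ xt yt x = 1) ∧
      (∀ yt y' y, 0 ≤ Q₂ yt y' y) ∧ (∀ yt y', ∑ y, Q₂ yt y' y = 1) ∧
      (∀ xt yt y' z,
        (∑ x, Q₁ xt yt x * W x y' z) = (∑ x, Q₁ xt y' x * W x yt z) ∧
        (∑ x, Q₁ xt y' x * W x yt z) = (∑ y, Q₂ yt y' y * W xt y z)) := by
  obtain ⟨P, hPnn, hPsum, hP⟩ := hover
  set q : ℝ := (Fintype.card Y : ℝ)⁻¹ with hq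
  have hcard : (0:ℝ) < (Fintype.card Y : ℝ) := by
    exact_mod_cast Fintype.card_pos
  have hqnn : 0 ≤ q := by positivity
  have hqsum : ∑ _y : Y, q = 1 := by
    rw [Finset.sum_const, nsmul_eq_mul, hq]
    field_simp
    simp [Finset.card_univ]
  refine ⟨fun xt _ x => ∑ y : Y, q * P xt y x, fun _ _ y => q, ?_, ?_, ?_, ?_, ?_⟩
  · intro xt yt x
    exact Finset.sum_nonneg fun y _ => mul_nonneg hqnn (hPnn _ _ _)
  · intro xt yt
    rw [Finset.sum_comm]
    calc ∑ y : Y, ∑ x : X, q * P xt y x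
        = ∑ y : Y, q * ∑ x : X, P xt y x := by
          simp [Finset.mul_sum]
      _ = ∑ _y : Y, q := by simp [hPsum]
      _ = 1 := hqsum
  · intro _ _ _; exact hqnn
  · intro _ _; exact hqsum
  · intro xt yt y' z
    have key : ∀ b : Y, ∑ x : X, (∑ y : Y, q * P xt y x) * W x b z
        = ∑ y : Y, q * W xt y z := by
      intro b
      simp only [Finset.sum_mul]
      rw [Finset.sum_comm]
      apply Finset.sum_congr rfl
      intro y _
      calc ∑ x : X, q * P xt y x * W x b z
          = q * ∑ x : X, P xt y x * W x b z := by
            rw [Finset.mul_sum]; simp [mul_assoc]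
        _ = q * W xt y z := by rw [hP]
    constructor
    · rw [key y', key yt]
    · rw [key yt]
end

section
/- The binary erasure MAC Z = X + Y (X = Y = {0,1}, Z = {0,1,2}, integer addition) is not 1-spoofable: there do not exist stochastic kernels Q₁(y | x̃, ỹ) and Q₂(x | x̃, x') such that for all x', x̃ ∈ {0,1}, ỹ ∈ {0,1}, z ∈ {0,1,2}, ∑_y Q₁(y|x̃,ỹ) W(z|x',y) = ∑_y Q₁(y|x',ỹ) W(z|x̃,y) = ∑_x Q₂(x|x̃,x') W(z|x,ỹ). -/
open Finset

/-- The binary erasure MAC `Z = X + Y`. -/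
def bemac (x y : Fin 2) (z : Fin 3) : ℝ :=
  if (z : ℕ) = (x : ℕ) + (y : ℕ) then 1 else 0

/-- the binary erasure MAC is not 1-spoofable. -/
theorem bemac_not_one_spoofable :
    ¬ ∃ (Q₁ : Fin 2 → Fin 2 → Fin 2 → ℝ) (Q₂ : Fin 2 → Fin 2 → Fin 2 → ℝ),
      (∀ xt yt y, 0 ≤ Q₁ xt yt y) ∧ (∀ xt yt, ∑ y, Q₁ xt yt y = 1) ∧
      (∀ xt x' x, 0 ≤ Q₂ xt x' x) ∧ (∀ xt x', ∑ x, Q₂ xt x' x = 1) ∧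
      (∀ (x' xt yt : Fin 2) (z : Fin 3),
        (∑ y, Q₁ xt yt y * bemac x' y z) = (∑ y, Q₁ x' yt y * bemac xt y z) ∧
        (∑ y, Q₁ x' yt y * bemac xt y z) = (∑ x, Q₂ xt x' x * bemac x yt z)) := by
  rintro ⟨Q₁, Q₂, h1, h2, h3, h4, h5⟩
  have a1 := h5 1 0 1 2
  have a2 := h5 1 0 0 0
  have s1 := h2 0 1
  have s2 := h2 1 0
  have s3 := h4 0 1
  have n1 := h1 0 1 0
  have n2 := h1 0 1 1
  have n3 := h1 1 0 0
  have n4 := h3 0 1 0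
  have n5 := h3 0 1 1
  simp only [Fin.sum_univ_two, bemac] at a1 a2 s1 s2 s3
  norm_num at a1 a2
  obtain ⟨a1l, a1r⟩ := a1
  obtain ⟨a2l, a2r⟩ := a2
  linarith
end

section
/- Let Z₁, …, Z_N be random variables and let f_i(Z₁,…,Z_i) ∈ [0,1] be measurable functions. If E[f_i(Z₁,…,Z_i) | Z₁,…,Z_{i-1}] ≤ a almost surely for every i = 1,…,N, then for every t, P( (1/N) ∑_{i=1}^N f_i(Z₁,…,Z_i) > t ) ≤ 2^{-N (t - a log₂ e)}. -/
open Finset Classical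

private lemma two_rpow_le_one_add (x : ℝ) (h0 : 0 ≤ x) (h1 : x ≤ 1) :
    (2:ℝ) ^ x ≤ 1 + x := by
  have h := convexOn_exp.2 (Set.mem_univ (0:ℝ)) (Set.mem_univ (Real.log 2))
    (by linarith : (0:ℝ) ≤ 1 - x) h0 (by ring)
  simp only [smul_eq_mul, mul_zero, zero_add, Real.exp_zero,
    Real.exp_log (by norm_num : (0:ℝ) < 2)] at h
  rw [Real.rpow_def_of_pos (by norm_num : (0:ℝ) < 2)]
  calc Real.exp (Real.log 2 * x) = Real.exp (x * Real.log 2) := by ring_nf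
    _ ≤ (1 - x) * 1 + x * 2 := h
    _ = 1 + x := by ring

private lemma fiber_sum_le {Ω α : Type} [Fintype Ω] [Fintype α]
    (p : Ω → ℝ) (hp : ∀ ω, 0 ≤ p ω) {N : ℕ} (Z : Fin N → Ω → α) (i : Fin N)
    (F g : Ω → ℝ) (hg0 : ∀ ω, 0 ≤ g ω)
    (hgmeas : ∀ ω ω' : Ω, (∀ j : Fin N, j < i → Z j ω = Z j ω') → g ω = g ω')
    (a : ℝ)
    (hcond : ∀ ω : Ω,
      (∑ ω' ∈ Finset.univ.filter (fun ω' => ∀ j : Fin N, j < i → Z j ω' = Z j ω), p ω' * F ω')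
        ≤ a * ∑ ω' ∈ Finset.univ.filter (fun ω' => ∀ j : Fin N, j < i → Z j ω' = Z j ω), p ω') :
    ∑ ω, p ω * g ω * F ω ≤ a * ∑ ω, p ω * g ω := by
  classical
  set φ : Ω → (Fin N → Option α) := fun ω j => if j < i then some (Z j ω) else none with hφ
  have hfib : ∀ ω₀ : Ω, Finset.univ.filter (fun ω => φ ω = φ ω₀)
      = Finset.univ.filter (fun ω' => ∀ j : Fin N, j < i → Z j ω' = Z j ω₀) := by
    intro ω₀
    ext ω
    simp only [mem_filter, mem_univ, true_and, hφ]
    constructor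
    · intro h j hj
      have := congrFun h j
      simpa [hj] using this
    · intro h
      funext j
      by_cases hj : j < i
      · simp [hj, h j hj]
      · simp [hj]
  have h1 : ∑ ω, p ω * g ω * F ω
      = ∑ v ∈ Finset.univ.image φ,
          ∑ ω ∈ Finset.univ.filter (fun ω => φ ω = v), p ω * g ω * F ω :=
    (Finset.sum_fiberwise_of_maps_to (fun x _ => Finset.mem_image_of_mem φ (Finset.mem_univ x)) _).symm
  have h2 : ∑ ω, p ω * g ω
      = ∑ v ∈ Finset.univ.image φ,
          ∑ ω ∈ Finset.univ.filter (fun ω => φ ω = v), p ω * g ω :=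
    (Finset.sum_fiberwise_of_maps_to (fun x _ => Finset.mem_image_of_mem φ (Finset.mem_univ x)) _).symm
  rw [h1, h2, Finset.mul_sum]
  apply Finset.sum_le_sum
  intro v hv
  obtain ⟨ω₀, -, hω₀⟩ := Finset.mem_image.mp hv
  subst hω₀
  rw [hfib ω₀]
  set S := Finset.univ.filter (fun ω' => ∀ j : Fin N, j < i → Z j ω' = Z j ω₀) with hS
  have hgconst : ∀ ω ∈ S, g ω = g ω₀ := by
    intro ω hω
    rw [hS, Finset.mem_filter] at hω
    exact hgmeas ω ω₀ (fun j hj => hω.2 j hj)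
  have e1 : ∑ ω ∈ S, p ω * g ω * F ω = g ω₀ * ∑ ω ∈ S, p ω * F ω := by
    rw [Finset.mul_sum]
    apply Finset.sum_congr rfl
    intro ω hω; rw [hgconst ω hω]; ring
  have e2 : ∑ ω ∈ S, p ω * g ω = g ω₀ * ∑ ω ∈ S, p ω := by
    rw [Finset.mul_sum]
    apply Finset.sum_congr rfl
    intro ω hω; rw [hgconst ω hω]; ring
  rw [e1, e2]
  calc g ω₀ * ∑ ω ∈ S, p ω * F ω ≤ g ω₀ * (a * ∑ ω ∈ S, p ω) :=
        mul_le_mul_of_nonneg_left (hcond ω₀) (hg0 ω₀)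
    _ = a * (g ω₀ * ∑ ω ∈ S, p ω) := by ring

/-- STATEMENT 10 (Csiszár–Narayan Lemma A1), on a finite probability space:
if `E[fᵢ(Z₁,…,Zᵢ) | Z₁,…,Z_{i-1}] ≤ a` almost surely for every `i`, then
`P((1/N) ∑ᵢ fᵢ > t) ≤ 2^{-N(t - a log₂ e)}`. -/
theorem csiszar_narayan_A1
    {Ω α : Type} [Fintype Ω] [Fintype α]
    (p : Ω → ℝ) (hp : ∀ ω, 0 ≤ p ω) (hp1 : ∑ ω, p ω = 1)
    (N : ℕ) (Z : Fin N → Ω → α) (f : Fin N → Ω → ℝ)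
    (hf0 : ∀ i ω, 0 ≤ f i ω) (hf1 : ∀ i ω, f i ω ≤ 1)
    (hmeas : ∀ (i : Fin N) (ω ω' : Ω),
      (∀ j : Fin N, j ≤ i → Z j ω = Z j ω') → f i ω = f i ω')
    (a : ℝ)
    (hcond : ∀ (i : Fin N) (ω : Ω),
      (∑ ω' ∈ Finset.univ.filter (fun ω' => ∀ j : Fin N, j < i → Z j ω' = Z j ω),
          p ω' * f i ω')
        ≤ a * ∑ ω' ∈ Finset.univ.filter (fun ω' => ∀ j : Fin N, j < i → Z j ω' = Z j ω),
            p ω')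
    (t : ℝ) :
    ∑ ω ∈ Finset.univ.filter (fun ω => t < (1 / (N : ℝ)) * ∑ i, f i ω), p ω
      ≤ (2 : ℝ) ^ (-(N : ℝ) * (t - a * Real.logb 2 (Real.exp 1))) := by
  classical
  -- the sum over any subset is at most 1
  have hsub1 : ∀ s : Finset Ω, ∑ ω ∈ s, p ω ≤ 1 := by
    intro s
    rw [← hp1]
    exact Finset.sum_le_sum_of_subset_of_nonneg (Finset.subset_univ s) (fun ω _ _ => hp ω)
  rcases Nat.eq_zero_or_pos N with hN | hN
  · subst hN
    simp only [Nat.cast_zero, neg_zero, zero_mul, Real.rpow_zero]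
    exact hsub1 _
  -- now N ≥ 1 : first, a ≥ 0
  have ha : 0 ≤ a := by
    obtain ⟨ω, hω⟩ : ∃ ω, 0 < p ω := by
      by_contra h
      push_neg at h
      have : ∑ ω, p ω = 0 := le_antisymm (Finset.sum_nonpos (fun ω _ => h ω))
        (Finset.sum_nonneg (fun ω _ => hp ω))
      rw [hp1] at this; norm_num at this
    set i0 : Fin N := ⟨0, hN⟩
    have h := hcond i0 ω
    have hωmem : ω ∈ Finset.univ.filter (fun ω' => ∀ j : Fin N, j < i0 → Z j ω' = Z j ω) := by
      simp
    have hmass : 0 < ∑ ω' ∈ Finset.univ.filter (fun ω' => ∀ j : Fin N, j < i0 → Z j ω' = Z j ω), p ω' :=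
      lt_of_lt_of_le hω (Finset.single_le_sum (fun ω' _ => hp ω') hωmem)
    have hnum : 0 ≤ ∑ ω' ∈ Finset.univ.filter (fun ω' => ∀ j : Fin N, j < i0 → Z j ω' = Z j ω),
        p ω' * f i0 ω' :=
      Finset.sum_nonneg (fun ω' _ => mul_nonneg (hp ω') (hf0 i0 ω'))
    nlinarith
  -- partial products
  set g : ℕ → Ω → ℝ := fun k ω => ∏ j ∈ Finset.univ.filter (fun j : Fin N => (j : ℕ) < k), (1 + f j ω)
    with hg
  have hg0 : ∀ k ω, 0 ≤ g k ω := fun k ω =>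
    Finset.prod_nonneg (fun j _ => by linarith [hf0 j ω])
  -- main induction: E[g k] ≤ (1+a)^k
  have main : ∀ k : ℕ, k ≤ N → ∑ ω, p ω * g k ω ≤ (1 + a) ^ k := by
    intro k
    induction k with
    | zero =>
      intro _
      have : ∀ ω, g 0 ω = 1 := by
        intro ω; rw [hg]; simp
      simp only [this, mul_one, pow_zero, hp1, le_refl]
    | succ k ih =>
      intro hk
      have hkN : k < N := hk
      set i : Fin N := ⟨k, hkN⟩ with hi
      have hins : (Finset.univ.filter (fun j : Fin N => (j : ℕ) < k + 1))
          = insert i (Finset.univ.filter (fun j : Fin N => (j : ℕ) < k)) := by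
        ext j
        simp only [Finset.mem_filter, Finset.mem_univ, true_and, Finset.mem_insert, Fin.ext_iff, hi]
        omega
      have hnotmem : i ∉ Finset.univ.filter (fun j : Fin N => (j : ℕ) < k) := by
        simp [hi]
      have hsplit : ∀ ω, g (k + 1) ω = g k ω + g k ω * f i ω := by
        intro ω
        rw [hg]
        simp only [hins, Finset.prod_insert hnotmem]
        ring
      have hsum : ∑ ω, p ω * g (k + 1) ω
          = ∑ ω, p ω * g k ω + ∑ ω, p ω * g k ω * f i ω := by
        rw [← Finset.sum_add_distrib]
        apply Finset.sum_congr rfl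
        intro ω _
        rw [hsplit ω]; ring
      have hkey : ∑ ω, p ω * g k ω * f i ω ≤ a * ∑ ω, p ω * g k ω := by
        apply fiber_sum_le p hp Z i (f i) (g k) (hg0 k) _ a (fun ω => hcond i ω)
        intro ω ω' h
        rw [hg]
        apply Finset.prod_congr rfl
        intro j hj
        rw [Finset.mem_filter] at hj
        have : f j ω = f j ω' := by
          apply hmeas j ω ω'
          intro l hl
          apply h l
          have hlj : (l : ℕ) ≤ (j : ℕ) := hl
          have : (l : ℕ) < k := lt_of_le_of_lt hlj hj.2
          exact this
        rw [this]
      have hEg : 0 ≤ ∑ ω, p ω * g k ω :=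
        Finset.sum_nonneg (fun ω _ => mul_nonneg (hp ω) (hg0 k ω))
      calc ∑ ω, p ω * g (k + 1) ω
          ≤ ∑ ω, p ω * g k ω + a * ∑ ω, p ω * g k ω := by rw [hsum]; linarith
        _ = (1 + a) * ∑ ω, p ω * g k ω := by ring
        _ ≤ (1 + a) * (1 + a) ^ k :=
            mul_le_mul_of_nonneg_left (ih (le_of_lt hkN)) (by linarith)
        _ = (1 + a) ^ (k + 1) := by ring
  -- the full product bound
  have huniv : Finset.univ.filter (fun j : Fin N => (j : ℕ) < N) = Finset.univ := by
    ext j; simp [j.isLt]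
  have hfull : ∑ ω, p ω * ∏ j, (1 + f j ω) ≤ (1 + a) ^ N := by
    have := main N le_rfl
    rw [hg] at this
    simpa [huniv] using this
  -- Markov / Chernoff step
  set E := Finset.univ.filter (fun ω => t < (1 / (N : ℝ)) * ∑ i, f i ω) with hE
  have hNpos : (0 : ℝ) < (N : ℝ) := by exact_mod_cast hN
  have hmarkov : ∀ ω ∈ E, p ω ≤ (2:ℝ) ^ (-((N:ℝ) * t)) * (p ω * ∏ j, (2:ℝ) ^ (f j ω)) := by
    intro ω hω
    rw [hE, Finset.mem_filter] at hω
    have hsum : (N : ℝ) * t < ∑ j, f j ω := by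
      have := hω.2
      rw [div_mul_eq_mul_div, one_mul, lt_div_iff₀ hNpos] at this
      linarith [this]
    have hprod : ∏ j, (2:ℝ) ^ (f j ω) = (2:ℝ) ^ (∑ j, f j ω) :=
      (Real.rpow_sum_of_pos (by norm_num) _ _).symm
    have h2 : (2:ℝ) ^ ((N:ℝ) * t) ≤ (2:ℝ) ^ (∑ j, f j ω) :=
      Real.rpow_le_rpow_of_exponent_le (by norm_num) (le_of_lt hsum)
    have h3 : (1:ℝ) ≤ (2:ℝ) ^ (-((N:ℝ) * t)) * (2:ℝ) ^ (∑ j, f j ω) := by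
      rw [← Real.rpow_add (by norm_num : (0:ℝ) < 2)]
      calc (1:ℝ) = (2:ℝ) ^ (0:ℝ) := (Real.rpow_zero 2).symm
        _ ≤ (2:ℝ) ^ (-((N:ℝ) * t) + ∑ j, f j ω) :=
            Real.rpow_le_rpow_of_exponent_le (by norm_num) (by linarith)
    calc p ω = p ω * 1 := (mul_one _).symm
      _ ≤ p ω * ((2:ℝ) ^ (-((N:ℝ) * t)) * (2:ℝ) ^ (∑ j, f j ω)) :=
          mul_le_mul_of_nonneg_left h3 (hp ω)
      _ = (2:ℝ) ^ (-((N:ℝ) * t)) * (p ω * ∏ j, (2:ℝ) ^ (f j ω)) := by rw [hprod]; ring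
  have hstep1 : ∑ ω ∈ E, p ω ≤ (2:ℝ) ^ (-((N:ℝ) * t)) * ∑ ω, p ω * ∏ j, (2:ℝ) ^ (f j ω) := by
    calc ∑ ω ∈ E, p ω ≤ ∑ ω ∈ E, (2:ℝ) ^ (-((N:ℝ) * t)) * (p ω * ∏ j, (2:ℝ) ^ (f j ω)) :=
          Finset.sum_le_sum hmarkov
      _ ≤ ∑ ω, (2:ℝ) ^ (-((N:ℝ) * t)) * (p ω * ∏ j, (2:ℝ) ^ (f j ω)) := by
          apply Finset.sum_le_sum_of_subset_of_nonneg (Finset.subset_univ E)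
          intro ω _ _
          exact mul_nonneg (Real.rpow_nonneg (by norm_num) _)
            (mul_nonneg (hp ω) (Finset.prod_nonneg fun j _ => Real.rpow_nonneg (by norm_num) _))
      _ = (2:ℝ) ^ (-((N:ℝ) * t)) * ∑ ω, p ω * ∏ j, (2:ℝ) ^ (f j ω) := by
          rw [Finset.mul_sum]
  have hstep2 : ∑ ω, p ω * ∏ j, (2:ℝ) ^ (f j ω) ≤ (1 + a) ^ N := by
    refine le_trans (Finset.sum_le_sum fun ω _ => ?_) hfull
    apply mul_le_mul_of_nonneg_left _ (hp ω)
    apply Finset.prod_le_prod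
    · intro j _; exact Real.rpow_nonneg (by norm_num) _
    · intro j _; exact two_rpow_le_one_add _ (hf0 j ω) (hf1 j ω)
  have hstep3 : (1 + a) ^ N ≤ Real.exp a ^ N := by
    apply pow_le_pow_left₀ (by linarith)
    linarith [Real.add_one_le_exp a]
  -- identify the RHS
  have hrhs : (2 : ℝ) ^ (-(N : ℝ) * (t - a * Real.logb 2 (Real.exp 1)))
      = (2:ℝ) ^ (-((N:ℝ) * t)) * Real.exp a ^ N := by
    have hlogb : (2:ℝ) ^ (a * Real.logb 2 (Real.exp 1)) = Real.exp a := by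
      rw [mul_comm, Real.rpow_mul (by norm_num : (0:ℝ) ≤ 2),
        Real.rpow_logb (by norm_num) (by norm_num) (Real.exp_pos 1), Real.exp_one_rpow]
    have : -(N : ℝ) * (t - a * Real.logb 2 (Real.exp 1))
        = -((N:ℝ) * t) + (a * Real.logb 2 (Real.exp 1)) * (N : ℝ) := by ring
    rw [this, Real.rpow_add (by norm_num : (0:ℝ) < 2),
      Real.rpow_mul (by norm_num : (0:ℝ) ≤ 2), hlogb, Real.rpow_natCast]
  rw [hrhs]
  calc ∑ ω ∈ E, p ω ≤ (2:ℝ) ^ (-((N:ℝ) * t)) * ∑ ω, p ω * ∏ j, (2:ℝ) ^ (f j ω) := hstep1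
    _ ≤ (2:ℝ) ^ (-((N:ℝ) * t)) * Real.exp a ^ N := by
        apply mul_le_mul_of_nonneg_left _ (Real.rpow_nonneg (by norm_num) _)
        exact le_trans hstep2 hstep3
end

section
/- Let P_{X Y X̃ Ỹ Z} be a joint distribution on finite alphabets and W a stochastic kernel from X × Y to Z. If D(P_{XYZ} ‖ P_X P_Y W) + I(X̃Ỹ ; XZ | Y) < 2η, then D(P_{X X̃ Ỹ Z} ‖ P_X P_{X̃Ỹ} V) < 2η, where V(z|x,x̃,ỹ) := ∑_y P_{Y|X̃Ỹ}(y|x̃,ỹ) W(z|x,y). Consequently, by Pinsker's inequality, the total variation distance between P_{X X̃ Ỹ Z} and P_X P_{X̃Ỹ} V is less than √(2 ln 2 · 2η) ≤ 2√(ln 2 · η). -/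
open Finset


private lemma sum_rot3 {α β γ M : Type*} [AddCommMonoid M] [Fintype α] [Fintype β] [Fintype γ]
    (f : α → β → γ → M) : ∑ a, ∑ b, ∑ c, f a b c = ∑ b, ∑ c, ∑ a, f a b c := by
  rw [Finset.sum_comm]
  exact Finset.sum_congr rfl fun b _ => Finset.sum_comm

private lemma sum_rot4 {α β γ δ M : Type*} [AddCommMonoid M] [Fintype α] [Fintype β] [Fintype γ]
    [Fintype δ] (f : α → β → γ → δ → M) :
    ∑ a, ∑ b, ∑ c, ∑ d, f a b c d = ∑ b, ∑ c, ∑ d, ∑ a, f a b c d := by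
  rw [Finset.sum_comm]
  exact Finset.sum_congr rfl fun b _ => sum_rot3 _

private lemma sum_rot5 {α β γ δ ε M : Type*} [AddCommMonoid M] [Fintype α] [Fintype β] [Fintype γ]
    [Fintype δ] [Fintype ε] (f : α → β → γ → δ → ε → M) :
    ∑ a, ∑ b, ∑ c, ∑ d, ∑ e, f a b c d e = ∑ b, ∑ c, ∑ d, ∑ e, ∑ a, f a b c d e := by
  rw [Finset.sum_comm]
  exact Finset.sum_congr rfl fun b _ => sum_rot4 _

private lemma aux_log_sum {ι : Type*} (s : Finset ι) (a b : ι → ℝ)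
    (ha : ∀ i ∈ s, 0 < a i) (hb : ∀ i ∈ s, 0 < b i) :
    (∑ i ∈ s, a i) * Real.log ((∑ i ∈ s, a i) / (∑ i ∈ s, b i)) ≤
      ∑ i ∈ s, a i * Real.log (a i / b i) := by
  rcases s.eq_empty_or_nonempty with rfl | hs
  · simp
  have hA : 0 < ∑ i ∈ s, a i := Finset.sum_pos ha hs
  have hB : 0 < ∑ i ∈ s, b i := Finset.sum_pos hb hs
  set A := ∑ i ∈ s, a i
  set B := ∑ i ∈ s, b i
  have key : ∀ i ∈ s, a i - b i * (A / B) + a i * Real.log (A / B) ≤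
      a i * Real.log (a i / b i) := by
    intro i hi
    have hai := ha i hi
    have hbi := hb i hi
    have ht : 0 < (a i / b i) / (A / B) := by positivity
    have h1 : 1 - ((a i / b i) / (A / B))⁻¹ ≤ Real.log ((a i / b i) / (A / B)) :=
      Real.one_sub_inv_le_log_of_pos ht
    have h2 : Real.log ((a i / b i) / (A / B)) =
        Real.log (a i / b i) - Real.log (A / B) :=
      Real.log_div (by positivity) (by positivity)
    rw [h2] at h1
    have h3 := mul_le_mul_of_nonneg_left h1 hai.le
    have h4 : a i * (1 - ((a i / b i) / (A / B))⁻¹) = a i - b i * (A / B) := by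
      field_simp
    nlinarith [h3, h4]
  have hsum := Finset.sum_le_sum key
  have e1 : ∑ i ∈ s, (a i - b i * (A / B) + a i * Real.log (A / B)) =
      A - B * (A / B) + A * Real.log (A / B) := by
    rw [Finset.sum_add_distrib, Finset.sum_sub_distrib, ← Finset.sum_mul, ← Finset.sum_mul]
  have e2 : B * (A / B) = A := by field_simp
  rw [e1, e2] at hsum
  linarith

private lemma aux_pinsker_point (p q : ℝ) (hp : 0 < p) (hq : 0 < q) :
    (p - q) ^ 2 / (2 * (p + q)) ≤ p * Real.log (p / q) - p + q := by
  set m : ℝ := (p + q) / 2 with hm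
  have hm0 : 0 < m := by positivity
  have h1 : 1 - (p / m)⁻¹ ≤ Real.log (p / m) := Real.one_sub_inv_le_log_of_pos (by positivity)
  have h2 : 1 - (m / q)⁻¹ ≤ Real.log (m / q) := Real.one_sub_inv_le_log_of_pos (by positivity)
  have hlog : Real.log (p / q) = Real.log (p / m) + Real.log (m / q) := by
    rw [← Real.log_mul (by positivity) (by positivity)]
    congr 1
    field_simp
  have h3 := mul_le_mul_of_nonneg_left h1 hp.le
  have h4 := mul_le_mul_of_nonneg_left h2 hp.le
  have e1 : p * (1 - (p / m)⁻¹) = p - m := by field_simp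
  have e2 : p * (1 - (m / q)⁻¹) = p - p * (q / m) := by field_simp
  have e3 : (p - m) + (p - p * (q / m)) - p + q = (p - q) ^ 2 / (2 * (p + q)) := by
    rw [hm]; field_simp; ring
  rw [hlog]
  nlinarith [h3, h4]

set_option maxHeartbeats 1000000 in
/-- if `D(P_{XYZ} ‖ P_X P_Y W) + I(X̃Ỹ; XZ | Y) < 2η`, then
`D(P_{XX̃ỸZ} ‖ P_X P_{X̃Ỹ} V) < 2η` with `V(z|x,xt,yt) = ∑_y P_{Y|X̃Ỹ}(y|xt,yt) W(z|x,y)`,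
and by Pinsker the total variation distance is less than `√(2 ln 2 · 2η) = 2√(ln 2 · η)`. -/
theorem spoof_divergence_bound
    {X Y Z : Type} [Fintype X] [Fintype Y] [Fintype Z]
    (P : X → Y → X → Y → Z → ℝ)  -- joint of (X, Y, X̃, Ỹ, Z)
    (W : X → Y → Z → ℝ)
    (hPpos : ∀ x y xt yt z, 0 < P x y xt yt z)
    (hPsum : ∑ x, ∑ y, ∑ xt, ∑ yt, ∑ z, P x y xt yt z = 1)
    (hWpos : ∀ x y z, 0 < W x y z) (hWsum : ∀ x y, ∑ z, W x y z = 1)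
    (η : ℝ) :
    let PXYZ : X → Y → Z → ℝ := fun x y z => ∑ xt, ∑ yt, P x y xt yt z
    let PX : X → ℝ := fun x => ∑ y, ∑ xt, ∑ yt, ∑ z, P x y xt yt z
    let PY : Y → ℝ := fun y => ∑ x, ∑ xt, ∑ yt, ∑ z, P x y xt yt z
    let PXtYt : X → Y → ℝ := fun xt yt => ∑ x, ∑ y, ∑ z, P x y xt yt z
    let PYXtYt : Y → X → Y → ℝ := fun y xt yt => ∑ x, ∑ z, P x y xt yt z
    let PYXZ : Y → X → Z → ℝ := fun y x z => ∑ xt, ∑ yt, P x y xt yt z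
    let PXXtYtZ : X → X → Y → Z → ℝ := fun x xt yt z => ∑ y, P x y xt yt z
    let V : X → X → Y → Z → ℝ := fun x xt yt z =>
      ∑ y, (PYXtYt y xt yt / PXtYt xt yt) * W x y z
    let D0 : ℝ := ∑ x, ∑ y, ∑ z,
      PXYZ x y z * Real.logb 2 (PXYZ x y z / (PX x * PY y * W x y z))
    let Icond : ℝ := ∑ x, ∑ y, ∑ xt, ∑ yt, ∑ z,
      P x y xt yt z *
        Real.logb 2 ((P x y xt yt z * PY y) / (PYXtYt y xt yt * PYXZ y x z))
    let D2 : ℝ := ∑ x, ∑ xt, ∑ yt, ∑ z,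
      PXXtYtZ x xt yt z *
        Real.logb 2 (PXXtYtZ x xt yt z / (PX x * PXtYt xt yt * V x xt yt z))
    let dTV : ℝ := (1/2) * ∑ x, ∑ xt, ∑ yt, ∑ z,
      |PXXtYtZ x xt yt z - PX x * PXtYt xt yt * V x xt yt z|
    D0 + Icond < 2 * η →
      D2 < 2 * η ∧
      dTV < Real.sqrt (2 * Real.log 2 * (2 * η)) ∧
      dTV < 2 * Real.sqrt (Real.log 2 * η) := by
  intro PXYZ PX PY PXtYt PYXtYt PYXZ PXXtYtZ V D0 Icond D2 dTV
  have dPXYZ : PXYZ = fun x y z => ∑ xt, ∑ yt, P x y xt yt z := rfl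
  have dPX : PX = fun x => ∑ y, ∑ xt, ∑ yt, ∑ z, P x y xt yt z := rfl
  have dPY : PY = fun y => ∑ x, ∑ xt, ∑ yt, ∑ z, P x y xt yt z := rfl
  have dPXtYt : PXtYt = fun xt yt => ∑ x, ∑ y, ∑ z, P x y xt yt z := rfl
  have dPYXtYt : PYXtYt = fun y xt yt => ∑ x, ∑ z, P x y xt yt z := rfl
  have dPYXZ : PYXZ = fun y x z => ∑ xt, ∑ yt, P x y xt yt z := rfl
  have dPXXtYtZ : PXXtYtZ = fun x xt yt z => ∑ y, P x y xt yt z := rfl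
  have dV : V = fun x xt yt z => ∑ y, (PYXtYt y xt yt / PXtYt xt yt) * W x y z := rfl
  have dD0 : D0 = ∑ x, ∑ y, ∑ z,
      PXYZ x y z * Real.logb 2 (PXYZ x y z / (PX x * PY y * W x y z)) := rfl
  have dIcond : Icond = ∑ x, ∑ y, ∑ xt, ∑ yt, ∑ z,
      P x y xt yt z *
        Real.logb 2 ((P x y xt yt z * PY y) / (PYXtYt y xt yt * PYXZ y x z)) := rfl
  have dD2 : D2 = ∑ x, ∑ xt, ∑ yt, ∑ z,
      PXXtYtZ x xt yt z *
        Real.logb 2 (PXXtYtZ x xt yt z / (PX x * PXtYt xt yt * V x xt yt z)) := rfl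
  have ddTV : dTV = (1/2) * ∑ x, ∑ xt, ∑ yt, ∑ z,
      |PXXtYtZ x xt yt z - PX x * PXtYt xt yt * V x xt yt z| := rfl
  clear_value PXYZ PX PY PXtYt PYXtYt PYXZ PXXtYtZ V D0 Icond D2 dTV
  intro hlt
  -- nonemptiness
  haveI hXne : Nonempty X := by
    by_contra hc; rw [not_nonempty_iff] at hc; simp at hPsum
  haveI hYne : Nonempty Y := by
    by_contra hc; rw [not_nonempty_iff] at hc; simp at hPsum
  haveI hZne : Nonempty Z := by
    by_contra hc; rw [not_nonempty_iff] at hc; simp at hPsum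
  have hlog2 : (0:ℝ) < Real.log 2 := Real.log_pos one_lt_two
  -- positivity of marginals
  have hPXpos : ∀ x, 0 < PX x := fun x => by
    simp only [dPX]
    exact Finset.sum_pos (fun y _ => Finset.sum_pos (fun xt _ => Finset.sum_pos (fun yt _ =>
      Finset.sum_pos (fun z _ => hPpos x y xt yt z) univ_nonempty) univ_nonempty)
      univ_nonempty) univ_nonempty
  have hPYpos : ∀ y, 0 < PY y := fun y => by
    simp only [dPY]
    exact Finset.sum_pos (fun x _ => Finset.sum_pos (fun xt _ => Finset.sum_pos (fun yt _ =>
      Finset.sum_pos (fun z _ => hPpos x y xt yt z) univ_nonempty) univ_nonempty)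
      univ_nonempty) univ_nonempty
  have hPXYZpos : ∀ x y z, 0 < PXYZ x y z := fun x y z => by
    simp only [dPXYZ]
    exact Finset.sum_pos (fun xt _ => Finset.sum_pos (fun yt _ => hPpos x y xt yt z)
      univ_nonempty) univ_nonempty
  have hPYXZpos : ∀ y x z, 0 < PYXZ y x z := fun y x z => by
    simp only [dPYXZ]
    exact Finset.sum_pos (fun xt _ => Finset.sum_pos (fun yt _ => hPpos x y xt yt z)
      univ_nonempty) univ_nonempty
  have hPYXtYtpos : ∀ y xt yt, 0 < PYXtYt y xt yt := fun y xt yt => by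
    simp only [dPYXtYt]
    exact Finset.sum_pos (fun x _ => Finset.sum_pos (fun z _ => hPpos x y xt yt z)
      univ_nonempty) univ_nonempty
  have hPXtYtpos : ∀ xt yt, 0 < PXtYt xt yt := fun xt yt => by
    simp only [dPXtYt]
    exact Finset.sum_pos (fun x _ => Finset.sum_pos (fun y _ => Finset.sum_pos (fun z _ =>
      hPpos x y xt yt z) univ_nonempty) univ_nonempty) univ_nonempty
  have hApos : ∀ x xt yt z, 0 < PXXtYtZ x xt yt z := fun x xt yt z => by
    simp only [dPXXtYtZ]
    exact Finset.sum_pos (fun y _ => hPpos x y xt yt z) univ_nonempty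
  have hVpos : ∀ x xt yt z, 0 < V x xt yt z := fun x xt yt z => by
    simp only [dV]
    exact Finset.sum_pos (fun y _ =>
      mul_pos (div_pos (hPYXtYtpos y xt yt) (hPXtYtpos xt yt)) (hWpos x y z)) univ_nonempty
  have hBpos : ∀ x xt yt z, 0 < PX x * PXtYt xt yt * V x xt yt z := fun x xt yt z =>
    mul_pos (mul_pos (hPXpos x) (hPXtYtpos xt yt)) (hVpos x xt yt z)
  -- logb-to-log conversions
  have hD0' : D0 * Real.log 2 = ∑ x, ∑ y, ∑ z,
      PXYZ x y z * Real.log (PXYZ x y z / (PX x * PY y * W x y z)) := by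
    rw [dD0]
    simp only [Real.logb, Finset.sum_mul, mul_assoc, div_mul_cancel₀ _ hlog2.ne']
  have hIc' : Icond * Real.log 2 = ∑ x, ∑ y, ∑ xt, ∑ yt, ∑ z,
      P x y xt yt z *
        Real.log ((P x y xt yt z * PY y) / (PYXtYt y xt yt * PYXZ y x z)) := by
    rw [dIcond]
    simp only [Real.logb, Finset.sum_mul, mul_assoc, div_mul_cancel₀ _ hlog2.ne']
  have hD2' : D2 * Real.log 2 = ∑ x, ∑ xt, ∑ yt, ∑ z,
      PXXtYtZ x xt yt z *
        Real.log (PXXtYtZ x xt yt z / (PX x * PXtYt xt yt * V x xt yt z)) := by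
    rw [dD2]
    simp only [Real.logb, Finset.sum_mul, mul_assoc, div_mul_cancel₀ _ hlog2.ne']
  -- Step A : merge the two divergences
  have hexp : ∀ (x : X) (y : Y) (c : Z → ℝ), (∑ z, PXYZ x y z * c z)
      = ∑ xt, ∑ yt, ∑ z, P x y xt yt z * c z := by
    intro x y c
    simp only [dPXYZ, Finset.sum_mul]
    exact sum_rot3 _
  have hstepA : (∑ x, ∑ y, ∑ z,
        PXYZ x y z * Real.log (PXYZ x y z / (PX x * PY y * W x y z)))
      + (∑ x, ∑ y, ∑ xt, ∑ yt, ∑ z, P x y xt yt z *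
          Real.log ((P x y xt yt z * PY y) / (PYXtYt y xt yt * PYXZ y x z)))
      = ∑ x, ∑ y, ∑ xt, ∑ yt, ∑ z, P x y xt yt z *
          Real.log (P x y xt yt z / (PX x * PYXtYt y xt yt * W x y z)) := by
    have e1 : (∑ x, ∑ y, ∑ z,
        PXYZ x y z * Real.log (PXYZ x y z / (PX x * PY y * W x y z)))
        = ∑ x, ∑ y, ∑ xt, ∑ yt, ∑ z,
          P x y xt yt z * Real.log (PXYZ x y z / (PX x * PY y * W x y z)) :=
      Finset.sum_congr rfl fun x _ => Finset.sum_congr rfl fun y _ => hexp x y _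
    rw [e1]
    simp only [← Finset.sum_add_distrib]
    refine Finset.sum_congr rfl fun x _ => Finset.sum_congr rfl fun y _ =>
      Finset.sum_congr rfl fun xt _ => Finset.sum_congr rfl fun yt _ =>
      Finset.sum_congr rfl fun z _ => ?_
    have hxyz := hPXYZpos x y z
    have hyxz := hPYXZpos y x z
    have hpx := hPXpos x
    have hpy := hPYpos y
    have hw := hWpos x y z
    have hyxy := hPYXtYtpos y xt yt
    have hp := hPpos x y xt yt z
    have eyxz : PYXZ y x z = PXYZ x y z := by simp only [dPYXZ, dPXYZ]
    have ne1 : PXYZ x y z / (PX x * PY y * W x y z) ≠ 0 :=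
      (div_pos hxyz (mul_pos (mul_pos hpx hpy) hw)).ne'
    have ne2 : (P x y xt yt z * PY y) / (PYXtYt y xt yt * PYXZ y x z) ≠ 0 :=
      (div_pos (mul_pos hp hpy) (mul_pos hyxy hyxz)).ne'
    have eq : (PXYZ x y z / (PX x * PY y * W x y z)) *
        ((P x y xt yt z * PY y) / (PYXtYt y xt yt * PYXZ y x z))
        = P x y xt yt z / (PX x * PYXtYt y xt yt * W x y z) := by
      rw [eyxz]
      field_simp
    rw [← mul_add, ← Real.log_mul ne1 ne2, eq]
  -- Step B : log-sum over y
  have hBsum : ∀ x xt yt z, (∑ y, PX x * PYXtYt y xt yt * W x y z)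
      = PX x * PXtYt xt yt * V x xt yt z := by
    intro x xt yt z
    simp only [dV, Finset.mul_sum]
    refine Finset.sum_congr rfl fun y _ => ?_
    have h := (hPXtYtpos xt yt).ne'
    field_simp
  have hstepB : (∑ x, ∑ xt, ∑ yt, ∑ z, PXXtYtZ x xt yt z *
        Real.log (PXXtYtZ x xt yt z / (PX x * PXtYt xt yt * V x xt yt z)))
      ≤ ∑ x, ∑ y, ∑ xt, ∑ yt, ∑ z, P x y xt yt z *
          Real.log (P x y xt yt z / (PX x * PYXtYt y xt yt * W x y z)) := by
    have reord : (∑ x, ∑ y, ∑ xt, ∑ yt, ∑ z,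
        P x y xt yt z * Real.log (P x y xt yt z / (PX x * PYXtYt y xt yt * W x y z)))
        = ∑ x, ∑ xt, ∑ yt, ∑ z, ∑ y,
        P x y xt yt z * Real.log (P x y xt yt z / (PX x * PYXtYt y xt yt * W x y z)) :=
      Finset.sum_congr rfl fun x _ => sum_rot4 _
    rw [reord]
    refine Finset.sum_le_sum fun x _ => Finset.sum_le_sum fun xt _ =>
      Finset.sum_le_sum fun yt _ => Finset.sum_le_sum fun z _ => ?_
    have hAeq : PXXtYtZ x xt yt z = ∑ y, P x y xt yt z := by simp only [dPXXtYtZ]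
    rw [hAeq, ← hBsum x xt yt z]
    exact aux_log_sum (univ : Finset Y) (fun y => P x y xt yt z)
      (fun y => PX x * PYXtYt y xt yt * W x y z)
      (fun y _ => hPpos x y xt yt z)
      (fun y _ => mul_pos (mul_pos (hPXpos x) (hPYXtYtpos y xt yt)) (hWpos x y z))
  -- flat versions over the product type
  have hflatd2 : (∑ x, ∑ xt, ∑ yt, ∑ z, PXXtYtZ x xt yt z *
        Real.log (PXXtYtZ x xt yt z / (PX x * PXtYt xt yt * V x xt yt z)))
      = ∑ p : X × X × Y × Z,
      PXXtYtZ p.1 p.2.1 p.2.2.1 p.2.2.2 * Real.log (PXXtYtZ p.1 p.2.1 p.2.2.1 p.2.2.2 /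
        (PX p.1 * PXtYt p.2.1 p.2.2.1 * V p.1 p.2.1 p.2.2.1 p.2.2.2)) := by
    simp only [Fintype.sum_prod_type]
  have hsumA : (∑ p : X × X × Y × Z, PXXtYtZ p.1 p.2.1 p.2.2.1 p.2.2.2) = 1 := by
    simp only [Fintype.sum_prod_type, dPXXtYtZ]
    rw [← hPsum]
    exact Finset.sum_congr rfl fun x _ => (sum_rot4 _).symm
  have hPXtYtsum : (∑ xt, ∑ yt, PXtYt xt yt) = 1 := by
    simp only [dPXtYt]
    rw [sum_rot5, sum_rot5, ← hPsum]
    exact Finset.sum_congr rfl fun x _ => Finset.sum_congr rfl fun y _ => sum_rot3 _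
  have hVsum : ∀ x xt yt, (∑ z, V x xt yt z) = 1 := by
    intro x xt yt
    simp only [dV]
    rw [Finset.sum_comm]
    have e : ∀ y, (∑ z, (PYXtYt y xt yt / PXtYt xt yt) * W x y z)
        = PYXtYt y xt yt / PXtYt xt yt := by
      intro y
      rw [← Finset.mul_sum, hWsum x y, mul_one]
    rw [Finset.sum_congr rfl fun y _ => e y, ← Finset.sum_div]
    have e2 : (∑ y, PYXtYt y xt yt) = PXtYt xt yt := by
      simp only [dPYXtYt, dPXtYt]
      exact Finset.sum_comm
    rw [e2, div_self (hPXtYtpos xt yt).ne']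
  have hsumB : (∑ p : X × X × Y × Z, PX p.1 * PXtYt p.2.1 p.2.2.1 * V p.1 p.2.1 p.2.2.1 p.2.2.2)
      = 1 := by
    simp only [Fintype.sum_prod_type]
    have e : ∀ x xt yt, (∑ z, PX x * PXtYt xt yt * V x xt yt z) = PX x * PXtYt xt yt := by
      intro x xt yt
      rw [← Finset.mul_sum, hVsum x xt yt, mul_one]
    calc (∑ x, ∑ xt, ∑ yt, ∑ z, PX x * PXtYt xt yt * V x xt yt z)
        = ∑ x, ∑ xt, ∑ yt, PX x * PXtYt xt yt :=
          Finset.sum_congr rfl fun x _ => Finset.sum_congr rfl fun xt _ =>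
            Finset.sum_congr rfl fun yt _ => e x xt yt
      _ = (∑ x, PX x) * (∑ xt, ∑ yt, PXtYt xt yt) := by
          simp only [Finset.sum_mul, Finset.mul_sum]
          exact sum_rot3 _
      _ = 1 := by
          have hPXsum : (∑ x, PX x) = 1 := by simp only [dPX]; exact hPsum
          rw [hPXtYtsum, hPXsum, mul_one]
  -- Gibbs : nonnegativity of d2
  have hgibbs : 0 ≤ ∑ x, ∑ xt, ∑ yt, ∑ z, PXXtYtZ x xt yt z *
        Real.log (PXXtYtZ x xt yt z / (PX x * PXtYt xt yt * V x xt yt z)) := by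
    have key := aux_log_sum (univ : Finset (X × X × Y × Z))
      (fun p => PXXtYtZ p.1 p.2.1 p.2.2.1 p.2.2.2)
      (fun p => PX p.1 * PXtYt p.2.1 p.2.2.1 * V p.1 p.2.1 p.2.2.1 p.2.2.2)
      (fun p _ => hApos _ _ _ _) (fun p _ => hBpos _ _ _ _)
    rw [hsumA, hsumB, ← hflatd2] at key
    simpa using key
  -- Pinsker
  have hpinsker : (∑ p : X × X × Y × Z,
      |PXXtYtZ p.1 p.2.1 p.2.2.1 p.2.2.2 -
        PX p.1 * PXtYt p.2.1 p.2.2.1 * V p.1 p.2.1 p.2.2.1 p.2.2.2|) ^ 2 / 4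
      ≤ ∑ x, ∑ xt, ∑ yt, ∑ z, PXXtYtZ x xt yt z *
        Real.log (PXXtYtZ x xt yt z / (PX x * PXtYt xt yt * V x xt yt z)) := by
    rw [hflatd2]
    have hga : ∀ p : X × X × Y × Z, 0 < PXXtYtZ p.1 p.2.1 p.2.2.1 p.2.2.2 :=
      fun p => hApos _ _ _ _
    have hgb : ∀ p : X × X × Y × Z,
        0 < PX p.1 * PXtYt p.2.1 p.2.2.1 * V p.1 p.2.1 p.2.2.1 p.2.2.2 :=
      fun p => hBpos _ _ _ _
    have hS1 : (∑ p : X × X × Y × Z,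
        (PXXtYtZ p.1 p.2.1 p.2.2.1 p.2.2.2 -
          PX p.1 * PXtYt p.2.1 p.2.2.1 * V p.1 p.2.1 p.2.2.1 p.2.2.2) ^ 2 /
          (2 * (PXXtYtZ p.1 p.2.1 p.2.2.1 p.2.2.2 +
            PX p.1 * PXtYt p.2.1 p.2.2.1 * V p.1 p.2.1 p.2.2.1 p.2.2.2)))
        ≤ ∑ p : X × X × Y × Z,
          PXXtYtZ p.1 p.2.1 p.2.2.1 p.2.2.2 * Real.log (PXXtYtZ p.1 p.2.1 p.2.2.1 p.2.2.2 /
            (PX p.1 * PXtYt p.2.1 p.2.2.1 * V p.1 p.2.1 p.2.2.1 p.2.2.2)) := by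
      have hsum := Finset.sum_le_sum (fun p (_ : p ∈ (univ : Finset (X × X × Y × Z))) =>
        aux_pinsker_point _ _ (hga p) (hgb p))
      have e : (∑ p : X × X × Y × Z,
          (PXXtYtZ p.1 p.2.1 p.2.2.1 p.2.2.2 * Real.log (PXXtYtZ p.1 p.2.1 p.2.2.1 p.2.2.2 /
            (PX p.1 * PXtYt p.2.1 p.2.2.1 * V p.1 p.2.1 p.2.2.1 p.2.2.2))
            - PXXtYtZ p.1 p.2.1 p.2.2.1 p.2.2.2 +
              PX p.1 * PXtYt p.2.1 p.2.2.1 * V p.1 p.2.1 p.2.2.1 p.2.2.2))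
          = ∑ p : X × X × Y × Z,
          PXXtYtZ p.1 p.2.1 p.2.2.1 p.2.2.2 * Real.log (PXXtYtZ p.1 p.2.1 p.2.2.1 p.2.2.2 /
            (PX p.1 * PXtYt p.2.1 p.2.2.1 * V p.1 p.2.1 p.2.2.1 p.2.2.2)) := by
        rw [Finset.sum_add_distrib, Finset.sum_sub_distrib, hsumA, hsumB]
        ring
      rw [e] at hsum
      exact hsum
    have hCS := Finset.sq_sum_div_le_sum_sq_div (univ : Finset (X × X × Y × Z))
      (fun p => |PXXtYtZ p.1 p.2.1 p.2.2.1 p.2.2.2 -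
        PX p.1 * PXtYt p.2.1 p.2.2.1 * V p.1 p.2.1 p.2.2.1 p.2.2.2|)
      (g := fun p => 2 * (PXXtYtZ p.1 p.2.1 p.2.2.1 p.2.2.2 +
        PX p.1 * PXtYt p.2.1 p.2.2.1 * V p.1 p.2.1 p.2.2.1 p.2.2.2))
      (fun p _ => by
        have h1 := hga p; have h2 := hgb p
        show (0:ℝ) < 2 * (PXXtYtZ p.1 p.2.1 p.2.2.1 p.2.2.2 +
          PX p.1 * PXtYt p.2.1 p.2.2.1 * V p.1 p.2.1 p.2.2.1 p.2.2.2)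
        linarith)
    simp only [sq_abs] at hCS
    have hg4 : (∑ p : X × X × Y × Z, 2 * (PXXtYtZ p.1 p.2.1 p.2.2.1 p.2.2.2 +
        PX p.1 * PXtYt p.2.1 p.2.2.1 * V p.1 p.2.1 p.2.2.1 p.2.2.2)) = 4 := by
      rw [← Finset.mul_sum, Finset.sum_add_distrib, hsumA, hsumB]
      norm_num
    rw [hg4] at hCS
    exact hCS.trans hS1
  -- flat dTV
  have hdTVflat : dTV = (1/2) * ∑ p : X × X × Y × Z,
      |PXXtYtZ p.1 p.2.1 p.2.2.1 p.2.2.2 -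
        PX p.1 * PXtYt p.2.1 p.2.2.1 * V p.1 p.2.1 p.2.2.1 p.2.2.2| := by
    rw [ddTV]
    congr 1
    simp only [Fintype.sum_prod_type]
  -- conclusions
  have hd2lt : (∑ x, ∑ xt, ∑ yt, ∑ z, PXXtYtZ x xt yt z *
      Real.log (PXXtYtZ x xt yt z / (PX x * PXtYt xt yt * V x xt yt z)))
      < 2 * η * Real.log 2 := by
    have h1 : (D0 + Icond) * Real.log 2 < 2 * η * Real.log 2 :=
      mul_lt_mul_of_pos_right hlt hlog2
    rw [add_mul, hD0', hIc'] at h1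
    rw [hstepA] at h1
    linarith [hstepB]
  have hηpos : 0 < η := by nlinarith [hgibbs, hd2lt, hlog2]
  have hdTVnonneg : 0 ≤ dTV := by
    rw [hdTVflat]
    have h : 0 ≤ ∑ p : X × X × Y × Z,
        |PXXtYtZ p.1 p.2.1 p.2.2.1 p.2.2.2 -
          PX p.1 * PXtYt p.2.1 p.2.2.1 * V p.1 p.2.1 p.2.2.1 p.2.2.2| :=
      Finset.sum_nonneg fun p _ => abs_nonneg _
    linarith
  have hdTVsq : dTV ^ 2 < 2 * η * Real.log 2 := by
    have h2 : dTV ^ 2 = (∑ p : X × X × Y × Z,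
        |PXXtYtZ p.1 p.2.1 p.2.2.1 p.2.2.2 -
          PX p.1 * PXtYt p.2.1 p.2.2.1 * V p.1 p.2.1 p.2.2.1 p.2.2.2|) ^ 2 / 4 := by
      rw [hdTVflat]; ring
    rw [h2]
    exact lt_of_le_of_lt hpinsker hd2lt
  refine ⟨?_, ?_, ?_⟩
  · have h : D2 * Real.log 2 < (2 * η) * Real.log 2 := by
      rw [hD2']; linarith [hd2lt]
    exact (mul_lt_mul_iff_of_pos_right hlog2).mp h
  · rw [Real.lt_sqrt hdTVnonneg]
    nlinarith [hdTVsq, hlog2, hηpos]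
  · have hsq : Real.sqrt (2 * Real.log 2 * (2 * η)) = 2 * Real.sqrt (Real.log 2 * η) := by
      rw [show 2 * Real.log 2 * (2 * η) = 2 ^ 2 * (Real.log 2 * η) by ring,
        Real.sqrt_mul (by positivity), Real.sqrt_sq (by norm_num)]
    rw [← hsq, Real.lt_sqrt hdTVnonneg]
    nlinarith [hdTVsq, hlog2, hηpos]
end

section
/- Let P be a joint distribution of (X, Y, X̃, Y', X', Ỹ, Z) on finite alphabets and W a MAC kernel. If D(P_{X'ỸZ} ‖ P_{X'} P_{Ỹ} W) ≤ η and I(X X̃ ; Ỹ Z | X') < η, then I(Ỹ ; X X̃) ≤ 2η; in particular I(Ỹ; X) ≤ 2η and I(Ỹ; X̃) ≤ 2η. -/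
open Finset

set_option linter.unusedVariables false
set_option maxHeartbeats 1000000

private lemma sumc {A : Type} [Fintype A] {f g : A → ℝ} (h : ∀ a, f a = g a) :
    ∑ a, f a = ∑ a, g a := Finset.sum_congr rfl fun a _ => h a

private lemma spos {A : Type} [Fintype A] [Nonempty A] {f : A → ℝ} (h : ∀ a, 0 < f a) :
    0 < ∑ a, f a := Finset.sum_pos (fun a _ => h a) Finset.univ_nonempty


private lemma sum_mul2 {A B : Type} [Fintype A] [Fintype B] (f : A → B → ℝ) (c : ℝ) :
    ∑ a, ∑ b, f a b * c = (∑ a, ∑ b, f a b) * c := by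
  rw [Finset.sum_mul]; exact sumc fun a => (Finset.sum_mul _ _ _).symm

private lemma perm_D {A B C D E : Type} [Fintype A] [Fintype B] [Fintype C] [Fintype D] [Fintype E]
    (f : A → B → C → D → E → ℝ) :
    ∑ a, ∑ b, ∑ c, ∑ d, ∑ e, f a b c d e = ∑ d, ∑ e, ∑ a, ∑ b, ∑ c, f a b c d e :=
  (sumc fun a => sumc fun b => Finset.sum_comm).trans <|
  (sumc fun a => sumc fun b => sumc fun d => Finset.sum_comm).trans <|
  (sumc fun a => Finset.sum_comm).trans <|
  (sumc fun a => sumc fun d => Finset.sum_comm).trans <|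
  (Finset.sum_comm).trans <|
  (sumc fun d => Finset.sum_comm)

private lemma perm_I3 {A B C D E : Type} [Fintype A] [Fintype B] [Fintype C] [Fintype D] [Fintype E]
    (f : A → B → C → D → E → ℝ) :
    ∑ a, ∑ b, ∑ c, ∑ d, ∑ e, f a b c d e = ∑ b, ∑ c, ∑ d, ∑ a, ∑ e, f a b c d e :=
  (Finset.sum_comm).trans <|
  (sumc fun b => Finset.sum_comm).trans <|
  (sumc fun b => sumc fun c => Finset.sum_comm)

private lemma perm_P {A B C D E F G : Type} [Fintype A] [Fintype B] [Fintype C] [Fintype D]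
    [Fintype E] [Fintype F] [Fintype G] (f : A → B → C → D → E → F → G → ℝ) :
    ∑ a, ∑ b, ∑ c, ∑ d, ∑ e, ∑ x, ∑ g, f a b c d e x g
      = ∑ a, ∑ c, ∑ e, ∑ x, ∑ g, ∑ b, ∑ d, f a b c d e x g :=
  (sumc fun a => Finset.sum_comm).trans <|
  (sumc fun a => sumc fun c => Finset.sum_comm).trans <|
  (sumc fun a => sumc fun c => sumc fun d => Finset.sum_comm).trans <|
  (sumc fun a => sumc fun c => sumc fun d => sumc fun e => Finset.sum_comm).trans <|
  (sumc fun a => sumc fun c => sumc fun d => sumc fun e => sumc fun x => Finset.sum_comm).trans <|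
  (sumc fun a => sumc fun c => Finset.sum_comm).trans <|
  (sumc fun a => sumc fun c => sumc fun e => Finset.sum_comm).trans <|
  (sumc fun a => sumc fun c => sumc fun e => sumc fun x => Finset.sum_comm).trans <|
  (sumc fun a => sumc fun c => sumc fun e => sumc fun x => sumc fun g => Finset.sum_comm)

private lemma key_pt (p q : ℝ) (hp : 0 < p) (hq : 0 < q) :
    (p - q) / Real.log 2 ≤ p * Real.logb 2 (p / q) := by
  have h2 : 0 < Real.log 2 := Real.log_pos (by norm_num)
  have hlog : Real.log (q / p) ≤ q / p - 1 := Real.log_le_sub_one_of_pos (div_pos hq hp)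
  have hinv : Real.log (p / q) = - Real.log (q / p) := by
    rw [← Real.log_inv]; congr 1; rw [inv_div]
  have hqp : p * (q / p) = q := by field_simp
  have key : p - q ≤ p * Real.log (p / q) := by
    have := mul_le_mul_of_nonneg_left hlog hp.le
    nlinarith
  have heq : p * Real.logb 2 (p / q) = (p * Real.log (p / q)) / Real.log 2 := by
    rw [Real.logb]; ring
  rw [heq, div_le_div_iff_of_pos_right h2]
  exact key

private lemma dkl3 {A B C : Type} [Fintype A] [Fintype B] [Fintype C]
    (p q : A → B → C → ℝ) (hp : ∀ a b c, 0 < p a b c) (hq : ∀ a b c, 0 < q a b c)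
    (hpq : ∑ a, ∑ b, ∑ c, q a b c = ∑ a, ∑ b, ∑ c, p a b c) :
    0 ≤ ∑ a, ∑ b, ∑ c, p a b c * Real.logb 2 (p a b c / q a b c) := by
  have h : ∑ a, ∑ b, ∑ c, (p a b c - q a b c) / Real.log 2
      ≤ ∑ a, ∑ b, ∑ c, p a b c * Real.logb 2 (p a b c / q a b c) :=
    Finset.sum_le_sum fun a _ => Finset.sum_le_sum fun b _ => Finset.sum_le_sum fun c _ =>
      key_pt _ _ (hp a b c) (hq a b c)
  have h0 : ∑ a, ∑ b, ∑ c, (p a b c - q a b c) / Real.log 2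
      = (∑ a, ∑ b, ∑ c, p a b c - ∑ a, ∑ b, ∑ c, q a b c) / Real.log 2 := by
    simp [sub_div, Finset.sum_div, Finset.sum_sub_distrib]
  rw [h0, hpq, sub_self, zero_div] at h
  exact h

private lemma dkl5 {A B C D E : Type} [Fintype A] [Fintype B] [Fintype C] [Fintype D] [Fintype E]
    (p q : A → B → C → D → E → ℝ)
    (hp : ∀ a b c d e, 0 < p a b c d e) (hq : ∀ a b c d e, 0 < q a b c d e)
    (hpq : ∑ a, ∑ b, ∑ c, ∑ d, ∑ e, q a b c d e = ∑ a, ∑ b, ∑ c, ∑ d, ∑ e, p a b c d e) :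
    0 ≤ ∑ a, ∑ b, ∑ c, ∑ d, ∑ e,
        p a b c d e * Real.logb 2 (p a b c d e / q a b c d e) := by
  have h : ∑ a, ∑ b, ∑ c, ∑ d, ∑ e, (p a b c d e - q a b c d e) / Real.log 2
      ≤ ∑ a, ∑ b, ∑ c, ∑ d, ∑ e, p a b c d e * Real.logb 2 (p a b c d e / q a b c d e) :=
    Finset.sum_le_sum fun a _ => Finset.sum_le_sum fun b _ => Finset.sum_le_sum fun c _ =>
      Finset.sum_le_sum fun d _ => Finset.sum_le_sum fun e _ =>
      key_pt _ _ (hp a b c d e) (hq a b c d e)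
  have h0 : ∑ a, ∑ b, ∑ c, ∑ d, ∑ e, (p a b c d e - q a b c d e) / Real.log 2
      = (∑ a, ∑ b, ∑ c, ∑ d, ∑ e, p a b c d e
          - ∑ a, ∑ b, ∑ c, ∑ d, ∑ e, q a b c d e) / Real.log 2 := by
    simp [sub_div, Finset.sum_div, Finset.sum_sub_distrib]
  rw [h0, hpq, sub_self, zero_div] at h
  exact h

/-- Lemma "indep": if `D(P_{X'ỸZ} ‖ P_{X'} P_{Ỹ} W) ≤ η` and
`I(XX̃; ỸZ | X') < η`, then `I(Ỹ; XX̃) ≤ 2η`, and in particular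
`I(Ỹ; X) ≤ 2η` and `I(Ỹ; X̃) ≤ 2η`. -/
theorem indep_lemma
    {X Y Z : Type} [Fintype X] [Fintype Y] [Fintype Z]
    (P : X → Y → X → Y → X → Y → Z → ℝ)  -- joint of (X, Y, X̃, Y', X', Ỹ, Z)
    (W : X → Y → Z → ℝ)
    (hPpos : ∀ x y xt y' x' yt z, 0 < P x y xt y' x' yt z)
    (hPsum : ∑ x, ∑ y, ∑ xt, ∑ y', ∑ x', ∑ yt, ∑ z, P x y xt y' x' yt z = 1)
    (hWpos : ∀ x y z, 0 < W x y z) (hWsum : ∀ x y, ∑ z, W x y z = 1)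
    (η : ℝ) :
    let Q : X → X → X → Y → Z → ℝ := fun x xt x' yt z =>
      ∑ y, ∑ y', P x y xt y' x' yt z   -- marginal of (X, X̃, X', Ỹ, Z)
    let PXpYtZ : X → Y → Z → ℝ := fun x' yt z => ∑ x, ∑ xt, Q x xt x' yt z
    let PXp : X → ℝ := fun x' => ∑ yt, ∑ z, PXpYtZ x' yt z
    let PYt : Y → ℝ := fun yt => ∑ x', ∑ z, PXpYtZ x' yt z
    let PXpXXt : X → X → X → ℝ := fun x' x xt => ∑ yt, ∑ z, Q x xt x' yt z
    let PXXt : X → X → ℝ := fun x xt => ∑ x', ∑ yt, ∑ z, Q x xt x' yt z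
    let PYtXXt : Y → X → X → ℝ := fun yt x xt => ∑ x', ∑ z, Q x xt x' yt z
    let PXonly : X → ℝ := fun x => ∑ xt, PXXt x xt
    let PXtonly : X → ℝ := fun xt => ∑ x, PXXt x xt
    let PYtX : Y → X → ℝ := fun yt x => ∑ xt, PYtXXt yt x xt
    let PYtXt : Y → X → ℝ := fun yt xt => ∑ x, PYtXXt yt x xt
    let D : ℝ := ∑ x', ∑ yt, ∑ z,
      PXpYtZ x' yt z * Real.logb 2 (PXpYtZ x' yt z / (PXp x' * PYt yt * W x' yt z))
    let Icond : ℝ := ∑ x, ∑ xt, ∑ x', ∑ yt, ∑ z,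
      Q x xt x' yt z *
        Real.logb 2 ((Q x xt x' yt z * PXp x') / (PXpXXt x' x xt * PXpYtZ x' yt z))
    let IYtXXt : ℝ := ∑ yt, ∑ x, ∑ xt,
      PYtXXt yt x xt * Real.logb 2 (PYtXXt yt x xt / (PYt yt * PXXt x xt))
    let IYtX : ℝ := ∑ yt, ∑ x,
      PYtX yt x * Real.logb 2 (PYtX yt x / (PYt yt * PXonly x))
    let IYtXt : ℝ := ∑ yt, ∑ xt,
      PYtXt yt xt * Real.logb 2 (PYtXt yt xt / (PYt yt * PXtonly xt))
    D ≤ η → Icond < η →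
      IYtXXt ≤ 2 * η ∧ IYtX ≤ 2 * η ∧ IYtXt ≤ 2 * η := by
  intro Q PXpYtZ PXp PYt PXpXXt PXXt PYtXXt PXonly PXtonly PYtX PYtXt D Icond IYtXXt IYtX IYtXt
  intro hD hI
  -- nonemptiness
  have hNX : Nonempty X := by
    by_contra h; rw [not_nonempty_iff] at h; simp [Finset.univ_eq_empty] at hPsum
  have hNY : Nonempty Y := by
    by_contra h; rw [not_nonempty_iff] at h; simp [Finset.univ_eq_empty] at hPsum
  have hNZ : Nonempty Z := by
    by_contra h; rw [not_nonempty_iff] at h; simp [Finset.univ_eq_empty] at hPsum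
  -- positivity of all marginals
  have hQp : ∀ x xt x' yt z, 0 < Q x xt x' yt z := fun x xt x' yt z =>
    spos fun y => spos fun y' => hPpos x y xt y' x' yt z
  have hPXpYtZp : ∀ x' yt z, 0 < PXpYtZ x' yt z := fun x' yt z =>
    spos fun x => spos fun xt => hQp x xt x' yt z
  have hPXpp : ∀ x', 0 < PXp x' := fun x' =>
    spos fun yt => spos fun z => hPXpYtZp x' yt z
  have hPYtp : ∀ yt, 0 < PYt yt := fun yt =>
    spos fun x' => spos fun z => hPXpYtZp x' yt z
  have hPXpXXtp : ∀ x' x xt, 0 < PXpXXt x' x xt := fun x' x xt =>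
    spos fun yt => spos fun z => hQp x xt x' yt z
  have hPXXtp : ∀ x xt, 0 < PXXt x xt := fun x xt =>
    spos fun x' => spos fun yt => spos fun z => hQp x xt x' yt z
  have hPYtXXtp : ∀ yt x xt, 0 < PYtXXt yt x xt := fun yt x xt =>
    spos fun x' => spos fun z => hQp x xt x' yt z
  have hPXonlyp : ∀ x, 0 < PXonly x := fun x => spos fun xt => hPXXtp x xt
  have hPXtonlyp : ∀ xt, 0 < PXtonly xt := fun xt => spos fun x => hPXXtp x xt
  have hPYtXp : ∀ yt x, 0 < PYtX yt x := fun yt x => spos fun xt => hPYtXXtp yt x xt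
  have hPYtXtp : ∀ yt xt, 0 < PYtXt yt xt := fun yt xt => spos fun x => hPYtXXtp yt x xt
  -- total mass of Q
  have hS5Q : ∑ x, ∑ xt, ∑ x', ∑ yt, ∑ z, Q x xt x' yt z = 1 := by
    calc ∑ x, ∑ xt, ∑ x', ∑ yt, ∑ z, Q x xt x' yt z
        = ∑ x, ∑ xt, ∑ x', ∑ yt, ∑ z, ∑ y, ∑ y', P x y xt y' x' yt z := rfl
      _ = ∑ x, ∑ y, ∑ xt, ∑ y', ∑ x', ∑ yt, ∑ z, P x y xt y' x' yt z := (perm_P P).symm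
      _ = 1 := hPsum
  -- marginal identity
  have hytP : ∀ x xt, ∑ yt, PYtXXt yt x xt = PXXt x xt := by
    intro x xt
    calc ∑ yt, PYtXXt yt x xt = ∑ yt, ∑ x', ∑ z, Q x xt x' yt z := rfl
      _ = ∑ x', ∑ yt, ∑ z, Q x xt x' yt z := Finset.sum_comm
      _ = PXXt x xt := rfl
  -- total mass in order (yt, x, xt)
  have h3P : ∑ yt, ∑ x, ∑ xt, PYtXXt yt x xt = 1 := by
    calc ∑ yt, ∑ x, ∑ xt, PYtXXt yt x xt
        = ∑ yt, ∑ x, ∑ xt, ∑ x', ∑ z, Q x xt x' yt z := rfl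
      _ = ∑ x, ∑ xt, ∑ x', ∑ yt, ∑ z, Q x xt x' yt z :=
          perm_I3 (fun yt x xt x' z => Q x xt x' yt z)
      _ = 1 := hS5Q
  ------------------------------------------------------------------
  -- STEP 1 : IYtXXt ≤ D + Icond
  ------------------------------------------------------------------
  have hRp : ∀ x xt x' yt z,
      0 < PYtXXt yt x xt * PXpXXt x' x xt * W x' yt z / PXXt x xt := fun x xt x' yt z =>
    div_pos (mul_pos (mul_pos (hPYtXXtp yt x xt) (hPXpXXtp x' x xt)) (hWpos x' yt z))
      (hPXXtp x xt)
  have hR5 : ∑ x, ∑ xt, ∑ x', ∑ yt, ∑ z,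
      PYtXXt yt x xt * PXpXXt x' x xt * W x' yt z / PXXt x xt = 1 := by
    calc ∑ x, ∑ xt, ∑ x', ∑ yt, ∑ z,
          PYtXXt yt x xt * PXpXXt x' x xt * W x' yt z / PXXt x xt
        = ∑ x, ∑ xt, ∑ x', ∑ yt,
            PYtXXt yt x xt * PXpXXt x' x xt / PXXt x xt := by
          refine sumc fun x => sumc fun xt => sumc fun x' => sumc fun yt => ?_
          calc ∑ z, PYtXXt yt x xt * PXpXXt x' x xt * W x' yt z / PXXt x xt
              = ∑ z, (PYtXXt yt x xt * PXpXXt x' x xt / PXXt x xt) * W x' yt z :=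
                sumc fun z => by ring
            _ = (PYtXXt yt x xt * PXpXXt x' x xt / PXXt x xt) * ∑ z, W x' yt z :=
                (Finset.mul_sum _ _ _).symm
            _ = PYtXXt yt x xt * PXpXXt x' x xt / PXXt x xt := by rw [hWsum, mul_one]
      _ = ∑ x, ∑ xt, ∑ x', PXpXXt x' x xt := by
          refine sumc fun x => sumc fun xt => sumc fun x' => ?_
          calc ∑ yt, PYtXXt yt x xt * PXpXXt x' x xt / PXXt x xt
              = (∑ yt, PYtXXt yt x xt) * (PXpXXt x' x xt / PXXt x xt) := by
                rw [Finset.sum_mul]; exact sumc fun yt => by ring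
            _ = PXXt x xt * (PXpXXt x' x xt / PXXt x xt) := by rw [hytP]
            _ = PXpXXt x' x xt := by
                rw [mul_div_assoc']; exact mul_div_cancel_left₀ _ (ne_of_gt (hPXXtp x xt))
      _ = ∑ x, ∑ xt, ∑ x', ∑ yt, ∑ z, Q x xt x' yt z := rfl
      _ = 1 := hS5Q
  have hpos_main := dkl5 (fun x xt x' yt z => Q x xt x' yt z)
      (fun x xt x' yt z => PYtXXt yt x xt * PXpXXt x' x xt * W x' yt z / PXXt x xt)
      (fun x xt x' yt z => hQp x xt x' yt z)
      (fun x xt x' yt z => hRp x xt x' yt z)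
      (hR5.trans hS5Q.symm)
  have hterm : ∀ x xt x' yt z,
      Q x xt x' yt z * Real.logb 2 (Q x xt x' yt z /
          (PYtXXt yt x xt * PXpXXt x' x xt * W x' yt z / PXXt x xt))
        = Q x xt x' yt z *
            Real.logb 2 (PXpYtZ x' yt z / (PXp x' * PYt yt * W x' yt z))
          + Q x xt x' yt z *
            Real.logb 2 ((Q x xt x' yt z * PXp x') / (PXpXXt x' x xt * PXpYtZ x' yt z))
          - Q x xt x' yt z *
            Real.logb 2 (PYtXXt yt x xt / (PYt yt * PXXt x xt)) := by
    intro x xt x' yt z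
    have ha1 : PXpYtZ x' yt z / (PXp x' * PYt yt * W x' yt z) ≠ 0 :=
      ne_of_gt (div_pos (hPXpYtZp x' yt z)
        (mul_pos (mul_pos (hPXpp x') (hPYtp yt)) (hWpos x' yt z)))
    have ha2 : (Q x xt x' yt z * PXp x') / (PXpXXt x' x xt * PXpYtZ x' yt z) ≠ 0 :=
      ne_of_gt (div_pos (mul_pos (hQp x xt x' yt z) (hPXpp x'))
        (mul_pos (hPXpXXtp x' x xt) (hPXpYtZp x' yt z)))
    have ha3 : PYtXXt yt x xt / (PYt yt * PXXt x xt) ≠ 0 :=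
      ne_of_gt (div_pos (hPYtXXtp yt x xt) (mul_pos (hPYtp yt) (hPXXtp x xt)))
    have harg : Q x xt x' yt z /
          (PYtXXt yt x xt * PXpXXt x' x xt * W x' yt z / PXXt x xt)
        = (PXpYtZ x' yt z / (PXp x' * PYt yt * W x' yt z)
            * ((Q x xt x' yt z * PXp x') / (PXpXXt x' x xt * PXpYtZ x' yt z)))
          / (PYtXXt yt x xt / (PYt yt * PXXt x xt)) := by
      have h1 := ne_of_gt (hPXpYtZp x' yt z)
      have h2 := ne_of_gt (hPXpp x')
      have h3 := ne_of_gt (hPYtp yt)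
      have h4 := ne_of_gt (hWpos x' yt z)
      have h5 := ne_of_gt (hPXpXXtp x' x xt)
      have h6 := ne_of_gt (hPYtXXtp yt x xt)
      have h7 := ne_of_gt (hPXXtp x xt)
      field_simp
    rw [harg, Real.logb_div (mul_ne_zero ha1 ha2) ha3, Real.logb_mul ha1 ha2]
    ring
  -- rewrite the divergence sum
  have hsplit : ∑ x, ∑ xt, ∑ x', ∑ yt, ∑ z,
      Q x xt x' yt z * Real.logb 2 (Q x xt x' yt z /
          (PYtXXt yt x xt * PXpXXt x' x xt * W x' yt z / PXXt x xt))
      = D + Icond - IYtXXt := by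
    have e1 : ∑ x, ∑ xt, ∑ x', ∑ yt, ∑ z,
        Q x xt x' yt z * Real.logb 2 (PXpYtZ x' yt z / (PXp x' * PYt yt * W x' yt z)) = D := by
      calc ∑ x, ∑ xt, ∑ x', ∑ yt, ∑ z,
            Q x xt x' yt z * Real.logb 2 (PXpYtZ x' yt z / (PXp x' * PYt yt * W x' yt z))
          = ∑ x', ∑ yt, ∑ z, ∑ x, ∑ xt,
            Q x xt x' yt z * Real.logb 2 (PXpYtZ x' yt z / (PXp x' * PYt yt * W x' yt z)) :=
            (perm_D (fun x' yt z x xt => Q x xt x' yt z *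
              Real.logb 2 (PXpYtZ x' yt z / (PXp x' * PYt yt * W x' yt z)))).symm
        _ = ∑ x', ∑ yt, ∑ z, (∑ x, ∑ xt, Q x xt x' yt z) *
              Real.logb 2 (PXpYtZ x' yt z / (PXp x' * PYt yt * W x' yt z)) := by
            refine sumc fun x' => sumc fun yt => sumc fun z => ?_
            exact sum_mul2 (fun x xt => Q x xt x' yt z) _
        _ = D := rfl
    have e3 : ∑ x, ∑ xt, ∑ x', ∑ yt, ∑ z,
        Q x xt x' yt z * Real.logb 2 (PYtXXt yt x xt / (PYt yt * PXXt x xt)) = IYtXXt := by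
      calc ∑ x, ∑ xt, ∑ x', ∑ yt, ∑ z,
            Q x xt x' yt z * Real.logb 2 (PYtXXt yt x xt / (PYt yt * PXXt x xt))
          = ∑ yt, ∑ x, ∑ xt, ∑ x', ∑ z,
            Q x xt x' yt z * Real.logb 2 (PYtXXt yt x xt / (PYt yt * PXXt x xt)) :=
            (perm_I3 (fun yt x xt x' z => Q x xt x' yt z *
              Real.logb 2 (PYtXXt yt x xt / (PYt yt * PXXt x xt)))).symm
        _ = ∑ yt, ∑ x, ∑ xt, (∑ x', ∑ z, Q x xt x' yt z) *
              Real.logb 2 (PYtXXt yt x xt / (PYt yt * PXXt x xt)) := by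
            refine sumc fun yt => sumc fun x => sumc fun xt => ?_
            exact sum_mul2 (fun x' z => Q x xt x' yt z) _
        _ = IYtXXt := rfl
    calc ∑ x, ∑ xt, ∑ x', ∑ yt, ∑ z,
          Q x xt x' yt z * Real.logb 2 (Q x xt x' yt z /
            (PYtXXt yt x xt * PXpXXt x' x xt * W x' yt z / PXXt x xt))
        = ∑ x, ∑ xt, ∑ x', ∑ yt, ∑ z,
            (Q x xt x' yt z *
              Real.logb 2 (PXpYtZ x' yt z / (PXp x' * PYt yt * W x' yt z))
            + Q x xt x' yt z *
              Real.logb 2 ((Q x xt x' yt z * PXp x') / (PXpXXt x' x xt * PXpYtZ x' yt z))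
            - Q x xt x' yt z *
              Real.logb 2 (PYtXXt yt x xt / (PYt yt * PXXt x xt))) :=
          sumc fun x => sumc fun xt => sumc fun x' => sumc fun yt => sumc fun z =>
            hterm x xt x' yt z
      _ = D + Icond - IYtXXt := by
          simp only [Finset.sum_add_distrib, Finset.sum_sub_distrib]
          rw [e1, e3]
  have hstep1 : IYtXXt ≤ D + Icond := by
    rw [hsplit] at hpos_main; linarith
  ------------------------------------------------------------------
  -- STEP 2 : IYtX ≤ IYtXXt
  ------------------------------------------------------------------
  have hSp3 : ∀ yt x xt, 0 < PYtX yt x * PXXt x xt / PXonly x := fun yt x xt =>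
    div_pos (mul_pos (hPYtXp yt x) (hPXXtp x xt)) (hPXonlyp x)
  have h3S : ∑ yt, ∑ x, ∑ xt, PYtX yt x * PXXt x xt / PXonly x = 1 := by
    calc ∑ yt, ∑ x, ∑ xt, PYtX yt x * PXXt x xt / PXonly x
        = ∑ yt, ∑ x, PYtX yt x := by
          refine sumc fun yt => sumc fun x => ?_
          calc ∑ xt, PYtX yt x * PXXt x xt / PXonly x
              = (∑ xt, PXXt x xt) * (PYtX yt x / PXonly x) := by
                rw [Finset.sum_mul]; exact sumc fun xt => by ring
            _ = PXonly x * (PYtX yt x / PXonly x) := rfl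
            _ = PYtX yt x := by
                rw [mul_div_assoc']; exact mul_div_cancel_left₀ _ (ne_of_gt (hPXonlyp x))
      _ = ∑ yt, ∑ x, ∑ xt, PYtXXt yt x xt := rfl
      _ = 1 := h3P
  have hpos3 := dkl3 (fun yt x xt => PYtXXt yt x xt)
      (fun yt x xt => PYtX yt x * PXXt x xt / PXonly x)
      (fun yt x xt => hPYtXXtp yt x xt) hSp3 (h3S.trans h3P.symm)
  have hterm3 : ∀ yt x xt,
      PYtXXt yt x xt * Real.logb 2 (PYtXXt yt x xt / (PYtX yt x * PXXt x xt / PXonly x))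
        = PYtXXt yt x xt * Real.logb 2 (PYtXXt yt x xt / (PYt yt * PXXt x xt))
          - PYtXXt yt x xt * Real.logb 2 (PYtX yt x / (PYt yt * PXonly x)) := by
    intro yt x xt
    have ha1 : PYtXXt yt x xt / (PYt yt * PXXt x xt) ≠ 0 :=
      ne_of_gt (div_pos (hPYtXXtp yt x xt) (mul_pos (hPYtp yt) (hPXXtp x xt)))
    have ha2 : PYtX yt x / (PYt yt * PXonly x) ≠ 0 :=
      ne_of_gt (div_pos (hPYtXp yt x) (mul_pos (hPYtp yt) (hPXonlyp x)))
    have harg : PYtXXt yt x xt / (PYtX yt x * PXXt x xt / PXonly x)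
        = (PYtXXt yt x xt / (PYt yt * PXXt x xt)) / (PYtX yt x / (PYt yt * PXonly x)) := by
      have h1 := ne_of_gt (hPYtp yt)
      have h2 := ne_of_gt (hPXXtp x xt)
      have h3 := ne_of_gt (hPXonlyp x)
      have h4 := ne_of_gt (hPYtXp yt x)
      field_simp
    rw [harg, Real.logb_div ha1 ha2]
    ring
  have hsplit3 : ∑ yt, ∑ x, ∑ xt,
      PYtXXt yt x xt * Real.logb 2 (PYtXXt yt x xt / (PYtX yt x * PXXt x xt / PXonly x))
      = IYtXXt - IYtX := by
    have e4 : ∑ yt, ∑ x, ∑ xt,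
        PYtXXt yt x xt * Real.logb 2 (PYtX yt x / (PYt yt * PXonly x)) = IYtX := by
      calc ∑ yt, ∑ x, ∑ xt,
            PYtXXt yt x xt * Real.logb 2 (PYtX yt x / (PYt yt * PXonly x))
          = ∑ yt, ∑ x, (∑ xt, PYtXXt yt x xt) *
              Real.logb 2 (PYtX yt x / (PYt yt * PXonly x)) := by
            refine sumc fun yt => sumc fun x => ?_
            exact (Finset.sum_mul _ _ _).symm
        _ = IYtX := rfl
    calc ∑ yt, ∑ x, ∑ xt,
          PYtXXt yt x xt * Real.logb 2 (PYtXXt yt x xt / (PYtX yt x * PXXt x xt / PXonly x))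
        = ∑ yt, ∑ x, ∑ xt,
            (PYtXXt yt x xt * Real.logb 2 (PYtXXt yt x xt / (PYt yt * PXXt x xt))
            - PYtXXt yt x xt * Real.logb 2 (PYtX yt x / (PYt yt * PXonly x))) :=
          sumc fun yt => sumc fun x => sumc fun xt => hterm3 yt x xt
      _ = IYtXXt - IYtX := by
          simp only [Finset.sum_sub_distrib]
          rw [e4]
  have hstep2 : IYtX ≤ IYtXXt := by
    rw [hsplit3] at hpos3; linarith
  ------------------------------------------------------------------
  -- STEP 3 : IYtXt ≤ IYtXXt
  ------------------------------------------------------------------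
  have h4P : ∑ yt, ∑ xt, ∑ x, PYtXXt yt x xt = 1 := by
    calc ∑ yt, ∑ xt, ∑ x, PYtXXt yt x xt
        = ∑ yt, ∑ x, ∑ xt, PYtXXt yt x xt := sumc fun yt => Finset.sum_comm
      _ = 1 := h3P
  have hSp4 : ∀ yt xt x, 0 < PYtXt yt xt * PXXt x xt / PXtonly xt := fun yt xt x =>
    div_pos (mul_pos (hPYtXtp yt xt) (hPXXtp x xt)) (hPXtonlyp xt)
  have h4S : ∑ yt, ∑ xt, ∑ x, PYtXt yt xt * PXXt x xt / PXtonly xt = 1 := by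
    calc ∑ yt, ∑ xt, ∑ x, PYtXt yt xt * PXXt x xt / PXtonly xt
        = ∑ yt, ∑ xt, PYtXt yt xt := by
          refine sumc fun yt => sumc fun xt => ?_
          calc ∑ x, PYtXt yt xt * PXXt x xt / PXtonly xt
              = (∑ x, PXXt x xt) * (PYtXt yt xt / PXtonly xt) := by
                rw [Finset.sum_mul]; exact sumc fun x => by ring
            _ = PXtonly xt * (PYtXt yt xt / PXtonly xt) := rfl
            _ = PYtXt yt xt := by
                rw [mul_div_assoc']; exact mul_div_cancel_left₀ _ (ne_of_gt (hPXtonlyp xt))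
      _ = ∑ yt, ∑ xt, ∑ x, PYtXXt yt x xt := rfl
      _ = 1 := h4P
  have hpos4 := dkl3 (fun yt xt x => PYtXXt yt x xt)
      (fun yt xt x => PYtXt yt xt * PXXt x xt / PXtonly xt)
      (fun yt xt x => hPYtXXtp yt x xt) hSp4 (h4S.trans h4P.symm)
  have hterm4 : ∀ yt xt x,
      PYtXXt yt x xt * Real.logb 2 (PYtXXt yt x xt / (PYtXt yt xt * PXXt x xt / PXtonly xt))
        = PYtXXt yt x xt * Real.logb 2 (PYtXXt yt x xt / (PYt yt * PXXt x xt))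
          - PYtXXt yt x xt * Real.logb 2 (PYtXt yt xt / (PYt yt * PXtonly xt)) := by
    intro yt xt x
    have ha1 : PYtXXt yt x xt / (PYt yt * PXXt x xt) ≠ 0 :=
      ne_of_gt (div_pos (hPYtXXtp yt x xt) (mul_pos (hPYtp yt) (hPXXtp x xt)))
    have ha2 : PYtXt yt xt / (PYt yt * PXtonly xt) ≠ 0 :=
      ne_of_gt (div_pos (hPYtXtp yt xt) (mul_pos (hPYtp yt) (hPXtonlyp xt)))
    have harg : PYtXXt yt x xt / (PYtXt yt xt * PXXt x xt / PXtonly xt)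
        = (PYtXXt yt x xt / (PYt yt * PXXt x xt)) / (PYtXt yt xt / (PYt yt * PXtonly xt)) := by
      have h1 := ne_of_gt (hPYtp yt)
      have h2 := ne_of_gt (hPXXtp x xt)
      have h3 := ne_of_gt (hPXtonlyp xt)
      have h4 := ne_of_gt (hPYtXtp yt xt)
      field_simp
    rw [harg, Real.logb_div ha1 ha2]
    ring
  have hsplit4 : ∑ yt, ∑ xt, ∑ x,
      PYtXXt yt x xt * Real.logb 2 (PYtXXt yt x xt / (PYtXt yt xt * PXXt x xt / PXtonly xt))
      = IYtXXt - IYtXt := by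
    have e5 : ∑ yt, ∑ xt, ∑ x,
        PYtXXt yt x xt * Real.logb 2 (PYtXXt yt x xt / (PYt yt * PXXt x xt)) = IYtXXt := by
      calc ∑ yt, ∑ xt, ∑ x,
            PYtXXt yt x xt * Real.logb 2 (PYtXXt yt x xt / (PYt yt * PXXt x xt))
          = ∑ yt, ∑ x, ∑ xt,
            PYtXXt yt x xt * Real.logb 2 (PYtXXt yt x xt / (PYt yt * PXXt x xt)) :=
            sumc fun yt => Finset.sum_comm
        _ = IYtXXt := rfl
    have e6 : ∑ yt, ∑ xt, ∑ x,
        PYtXXt yt x xt * Real.logb 2 (PYtXt yt xt / (PYt yt * PXtonly xt)) = IYtXt := by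
      calc ∑ yt, ∑ xt, ∑ x,
            PYtXXt yt x xt * Real.logb 2 (PYtXt yt xt / (PYt yt * PXtonly xt))
          = ∑ yt, ∑ xt, (∑ x, PYtXXt yt x xt) *
              Real.logb 2 (PYtXt yt xt / (PYt yt * PXtonly xt)) := by
            refine sumc fun yt => sumc fun xt => ?_
            exact (Finset.sum_mul _ _ _).symm
        _ = IYtXt := rfl
    calc ∑ yt, ∑ xt, ∑ x,
          PYtXXt yt x xt * Real.logb 2 (PYtXXt yt x xt / (PYtXt yt xt * PXXt x xt / PXtonly xt))
        = ∑ yt, ∑ xt, ∑ x,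
            (PYtXXt yt x xt * Real.logb 2 (PYtXXt yt x xt / (PYt yt * PXXt x xt))
            - PYtXXt yt x xt * Real.logb 2 (PYtXt yt xt / (PYt yt * PXtonly xt))) :=
          sumc fun yt => sumc fun xt => sumc fun x => hterm4 yt xt x
      _ = IYtXXt - IYtXt := by
          simp only [Finset.sum_sub_distrib]
          rw [e5, e6]
  have hstep3 : IYtXt ≤ IYtXXt := by
    rw [hsplit4] at hpos4; linarith
  exact ⟨by linarith, by linarith, by linarith⟩
end
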